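/- Assume K ≥ 2, L ≥ 1 and 0 < c < 1/((K+1)² · (log(K+1))²). Then for every item i and every k : Fin K with k ≥ 1 (i.e. the recommended item of rank k+1 ≥ 2), the truncated personalized PageRank value satisfies Ŝ_i (P i k) < (1−c) · c / (D · log(k+1)). -/

import Mathlib

open Finset Matrix

/-- The normalizing constant `D = ∑_{r=1}^{K} 1 / log (r+1)`. -/
noncomputable def Dconst (K : ℕ) : ℝ := ∑ r ∈ Finset.Icc 1 K, 1 / Real.log ((r : ℝ) + 1)

/-- The weighted adjacency matrix of the recommendation network: `A i j = 1 / log (k+2)` if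
`P i k = j` for some (necessarily unique, by injectivity) rank `k : Fin K`, and `0` otherwise. -/
noncomputable def adj {n K : ℕ} (P : Fin n → Fin K → Fin n) :
    Matrix (Fin n) (Fin n) ℝ := fun i j =>
  ∑ k : Fin K, if P i k = j then 1 / Real.log (((k : ℕ) : ℝ) + 2) else 0

/-- The row-normalized adjacency matrix `Ã = D⁻¹ • A`. -/
noncomputable def normAdj {n K : ℕ} (P : Fin n → Fin K → Fin n) :
    Matrix (Fin n) (Fin n) ℝ :=
  (Dconst K)⁻¹ • adj P

/-- The truncated personalized PageRank vector
`Ŝ_i = (1-c) • ((∑_{k=0}^{L} (c • Ãᵀ)^k) *ᵥ e_i)`. -/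
noncomputable def pprTrunc {n K : ℕ} (P : Fin n → Fin K → Fin n) (c : ℝ) (L : ℕ)
    (i : Fin n) : Fin n → ℝ :=
  (1 - c) • ((∑ k ∈ Finset.range (L + 1), (c • (normAdj P)ᵀ) ^ k) *ᵥ Pi.single i 1)

/- ### Auxiliary lemmas -/

lemma Dconst_pos {K : ℕ} (hK : 1 ≤ K) : 0 < Dconst K := by
  unfold Dconst
  apply Finset.sum_pos
  · intro r hr
    simp only [Finset.mem_Icc] at hr
    have h1 : (1 : ℝ) < (r : ℝ) + 1 := by
      have : (1 : ℝ) ≤ (r : ℝ) := by exact_mod_cast hr.1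
      linarith
    exact one_div_pos.mpr (Real.log_pos h1)
  · exact ⟨1, by simp [Finset.mem_Icc, hK]⟩

lemma adj_nonneg {n K : ℕ} (P : Fin n → Fin K → Fin n) (i j : Fin n) :
    0 ≤ adj P i j := by
  unfold adj
  apply Finset.sum_nonneg
  intro k _
  split
  · have h1 : (1 : ℝ) < ((k : ℕ) : ℝ) + 2 := by
      have : (0:ℝ) ≤ ((k : ℕ) : ℝ) := Nat.cast_nonneg _
      linarith
    exact le_of_lt (one_div_pos.mpr (Real.log_pos h1))
  · exact le_refl 0

lemma adj_apply_rec {n K : ℕ} (P : Fin n → Fin K → Fin n)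
    (hinj : ∀ i, Function.Injective (P i)) (i : Fin n) (k : Fin K) :
    adj P i (P i k) = 1 / Real.log (((k : ℕ) : ℝ) + 2) := by
  unfold adj
  rw [Finset.sum_eq_single k]
  · simp
  · intro b _ hb
    rw [if_neg]
    intro h
    exact hb (hinj i h)
  · simp

lemma adj_le {n K : ℕ} (P : Fin n → Fin K → Fin n)
    (hinj : ∀ i, Function.Injective (P i)) (i j : Fin n) :
    adj P i j ≤ 1 / Real.log 2 := by
  have hlog2 : 0 < Real.log 2 := Real.log_pos (by norm_num)
  by_cases h : ∃ k, P i k = j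
  · obtain ⟨k0, hk0⟩ := h
    unfold adj
    rw [Finset.sum_eq_single k0]
    · rw [if_pos hk0]
      apply one_div_le_one_div_of_le hlog2
      apply Real.log_le_log (by norm_num)
      have : (0:ℝ) ≤ ((k0 : ℕ) : ℝ) := Nat.cast_nonneg _
      linarith
    · intro b _ hb
      rw [if_neg]
      intro h'
      exact hb (hinj i (h'.trans hk0.symm))
    · intro h'
      exact absurd (Finset.mem_univ k0) h'
  · unfold adj
    rw [Finset.sum_eq_zero]
    · positivity
    · intro b _
      exact if_neg (fun h' => h ⟨b, h'⟩)

lemma adj_rowsum {n K : ℕ} (P : Fin n → Fin K → Fin n) (i : Fin n) :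
    ∑ j, adj P i j = Dconst K := by
  unfold adj Dconst
  rw [Finset.sum_comm]
  have h1 : ∀ k : Fin K,
      ∑ j, (if P i k = j then 1 / Real.log (((k : ℕ) : ℝ) + 2) else 0)
        = 1 / Real.log (((k : ℕ) : ℝ) + 2) := by
    intro k
    rw [Finset.sum_ite_eq]
    simp
  rw [Finset.sum_congr rfl (fun k _ => h1 k)]
  rw [Fin.sum_univ_eq_sum_range (fun k => 1 / Real.log ((k : ℝ) + 2)) K]
  rw [← Finset.Ico_add_one_right_eq_Icc, Finset.sum_Ico_eq_sum_range]
  simp only [Nat.add_sub_cancel]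
  apply Finset.sum_congr rfl
  intro x _
  push_cast
  ring_nf

lemma pow_entry_nonneg {n : ℕ} (M : Matrix (Fin n) (Fin n) ℝ)
    (h : ∀ i j, 0 ≤ M i j) (m : ℕ) : ∀ i j, 0 ≤ (M ^ m) i j := by
  induction m with
  | zero => intro i j; rw [pow_zero]; by_cases hij : i = j <;>
      simp [Matrix.one_apply, hij]
  | succ s ih =>
    intro i j
    rw [pow_succ, Matrix.mul_apply]
    exact Finset.sum_nonneg fun l _ => mul_nonneg (ih i l) (h l j)

lemma pow_rowsum {n : ℕ} (M : Matrix (Fin n) (Fin n) ℝ)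
    (h : ∀ i, ∑ j, M i j = 1) (m : ℕ) : ∀ i, ∑ j, (M ^ m) i j = 1 := by
  induction m with
  | zero => intro i; simp [Matrix.one_apply]
  | succ s ih =>
    intro i
    simp only [pow_succ, Matrix.mul_apply]
    rw [Finset.sum_comm]
    calc ∑ l, ∑ j, (M ^ s) i l * M l j = ∑ l, (M ^ s) i l * ∑ j, M l j := by
          simp [Finset.mul_sum]
      _ = 1 := by simp only [h, mul_one]; exact ih i

lemma pow_entry_le {n : ℕ} (M : Matrix (Fin n) (Fin n) ℝ)
    (h0 : ∀ i j, 0 ≤ M i j) (h1 : ∀ i, ∑ j, M i j = 1) (b : ℝ)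
    (hb : ∀ i j, M i j ≤ b) (s : ℕ) : ∀ i j, (M ^ (s + 1)) i j ≤ b := by
  intro i j
  rw [pow_succ, Matrix.mul_apply]
  calc ∑ l, (M ^ s) i l * M l j ≤ ∑ l, (M ^ s) i l * b :=
        Finset.sum_le_sum fun l _ =>
          mul_le_mul_of_nonneg_left (hb l j) (pow_entry_nonneg M h0 s i l)
    _ = b := by rw [← Finset.sum_mul, pow_rowsum M h1 s i, one_mul]


lemma ppr_arith {c a a' g J : ℝ} (hc0 : 0 < c) (hJ : 3 ≤ J) (hg1 : 1 < g)
    (ha'lb : Real.log 2 ≤ a') (haub : a ≤ g) (ha'ub : a' ≤ g)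
    (hgap : 1 / J ≤ a - a')
    (hc1 : c < 1 / (J ^ 2 * g ^ 2)) :
    c ^ 2 / Real.log 2 + (1 - c) * c / a < (1 - c) * c / a' := by
  have hlog2 : (0.6931471803 : ℝ) < Real.log 2 := Real.log_two_gt_d9
  have hlog2' : (0 : ℝ) < Real.log 2 := by linarith
  have ha'pos : 0 < a' := lt_of_lt_of_le hlog2' ha'lb
  have hJ0 : (0 : ℝ) < J := by linarith
  have hJ0' : (0 : ℝ) < 1 / J := by positivity
  have hapos : 0 < a := by linarith
  have hg0 : (0 : ℝ) < g := by linarith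
  have hg2 : (1 : ℝ) ≤ g ^ 2 := by nlinarith
  have hJ2 : (9 : ℝ) ≤ J ^ 2 := by nlinarith
  have h9 : (9 : ℝ) ≤ J ^ 2 * g ^ 2 := by nlinarith
  have hc9 : c < 1 / 9 := lt_of_lt_of_le hc1 (one_div_le_one_div_of_le (by norm_num) h9)
  have hcore : c * a * a' < (1 - c) * Real.log 2 * (a - a') := by
    have haa : a * a' ≤ g * g := mul_le_mul haub ha'ub ha'pos.le hg0.le
    have h1 : c * a * a' ≤ c * (g * g) := by nlinarith [mul_le_mul_of_nonneg_left haa hc0.le]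
    have h2 : c * (g * g) < 1 / J ^ 2 := by
      have h3 := mul_lt_mul_of_pos_right hc1 (by positivity : (0:ℝ) < g * g)
      have h4 : 1 / (J ^ 2 * g ^ 2) * (g * g) = 1 / J ^ 2 := by
        field_simp
      rw [h4] at h3
      exact h3
    have h3 : 1 / J ^ 2 ≤ 1 / (3 * J) := by
      apply one_div_le_one_div_of_le
      · linarith
      · nlinarith
    have h4 : 1 / (3 * J) ≤ (1 - c) * Real.log 2 * (a - a') := by
      have h1c : (8 : ℝ) / 9 ≤ 1 - c := by linarith
      have hl2 : (3 : ℝ) / 8 ≤ Real.log 2 := by linarith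
      calc 1 / (3 * J) = 8 / 9 * (3 / 8) * (1 / J) := by
            field_simp
            ring
        _ ≤ (1 - c) * Real.log 2 * (a - a') :=
            mul_le_mul (mul_le_mul h1c hl2 (by norm_num) (by linarith)) hgap
              hJ0'.le (by positivity)
    linarith
  rw [div_add_div _ _ hlog2'.ne' hapos.ne', div_lt_div_iff₀ (by positivity) ha'pos]
  nlinarith [mul_lt_mul_of_pos_left hcore hc0]

/-- Upper bound on the truncated personalized PageRank value of the recommended item of rank
`k+1 ≥ 2`: `Ŝ_i (P i k) < (1-c) · c / (D · log (k+1))`. -/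
theorem pprTrunc_upper_bound_recommended
    (n K : ℕ) (hK : 2 ≤ K) (P : Fin n → Fin K → Fin n)
    (hinj : ∀ i, Function.Injective (P i))
    (hne : ∀ i k, P i k ≠ i)
    (c : ℝ) (L : ℕ) (hL : 1 ≤ L)
    (hc0 : 0 < c)
    (hc1 : c < 1 / (((K : ℝ) + 1) ^ 2 * Real.log ((K : ℝ) + 1) ^ 2))
    (i : Fin n) (k : Fin K) (hk : 1 ≤ (k : ℕ)) :
    pprTrunc P c L i (P i k) < (1 - c) * c / (Dconst K * Real.log (((k : ℕ) : ℝ) + 1)) := by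
  -- Notation
  set D : ℝ := Dconst K with hDdef
  set M : Matrix (Fin n) (Fin n) ℝ := normAdj P with hMdef
  set a : ℝ := Real.log (((k : ℕ) : ℝ) + 2) with hadef
  set a' : ℝ := Real.log (((k : ℕ) : ℝ) + 1) with ha'def
  set g : ℝ := Real.log ((K : ℝ) + 1) with hgdef
  have hD : 0 < D := Dconst_pos (le_trans one_le_two hK)
  have hlog2 : (0.6931471803 : ℝ) < Real.log 2 := Real.log_two_gt_d9
  have hlog2' : (0 : ℝ) < Real.log 2 := by linarith
  have hkR : (1 : ℝ) ≤ ((k : ℕ) : ℝ) := by exact_mod_cast hk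
  have hkK : ((k : ℕ) : ℝ) + 1 ≤ (K : ℝ) := by
    have : (k : ℕ) + 1 ≤ K := k.2
    exact_mod_cast this
  have hK3 : (3 : ℝ) ≤ (K : ℝ) + 1 := by
    have : (2 : ℝ) ≤ (K : ℝ) := by exact_mod_cast hK
    linarith
  -- Log facts
  have ha'lb : Real.log 2 ≤ a' := Real.log_le_log (by norm_num) (by linarith)
  have ha'pos : 0 < a' := lt_of_lt_of_le hlog2' ha'lb
  have hapos : 0 < a := lt_of_lt_of_le (Real.log_pos (by norm_num) : (0:ℝ) < Real.log 2)
    (Real.log_le_log (by norm_num) (by linarith))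
  have haub : a ≤ g := Real.log_le_log (by linarith) (by linarith)
  have ha'ub : a' ≤ g := Real.log_le_log (by linarith) (by linarith)
  have hg1 : 1 < g := by
    rw [hgdef, ← Real.exp_lt_exp, Real.exp_log (by linarith)]
    have := Real.exp_one_lt_d9
    linarith
  have hgap : 1 / ((K : ℝ) + 1) ≤ a - a' := by
    have hx : (0 : ℝ) < (((k : ℕ) : ℝ) + 1) / (((k : ℕ) : ℝ) + 2) := by positivity
    have h1 := Real.log_le_sub_one_of_pos hx
    rw [Real.log_div (by linarith) (by linarith)] at h1
    have h2 : 1 / (((k : ℕ) : ℝ) + 2) ≤ a - a' := by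
      rw [hadef, ha'def]
      have h3 : (((k : ℕ) : ℝ) + 1) / (((k : ℕ) : ℝ) + 2) - 1
          = -(1 / (((k : ℕ) : ℝ) + 2)) := by
        field_simp
        norm_num
      rw [h3] at h1
      linarith
    refine le_trans ?_ h2
    apply one_div_le_one_div_of_le
    · linarith
    · linarith
  -- Smallness of c
  have hg2 : (1 : ℝ) ≤ g ^ 2 := by nlinarith
  have hK2 : (9 : ℝ) ≤ ((K : ℝ) + 1) ^ 2 := by nlinarith
  have h9 : (9 : ℝ) ≤ ((K : ℝ) + 1) ^ 2 * g ^ 2 := by nlinarith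
  have hc9 : c < 1 / 9 :=
    lt_of_lt_of_le hc1 (one_div_le_one_div_of_le (by norm_num) h9)
  have hc1' : c < 1 := by linarith
  -- The key arithmetic inequality
  have hkey : c ^ 2 / Real.log 2 + (1 - c) * c / a < (1 - c) * c / a' :=
    ppr_arith hc0 hK3 hg1 ha'lb haub ha'ub hgap hc1
  -- Stochastic matrix properties
  have hMnn : ∀ p q, 0 ≤ M p q := by
    intro p q
    simp only [hMdef, normAdj, Matrix.smul_apply, smul_eq_mul]
    exact mul_nonneg (inv_nonneg.mpr hD.le) (adj_nonneg P p q)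
  have hMrow : ∀ p, ∑ q, M p q = 1 := by
    intro p
    simp only [hMdef, normAdj, Matrix.smul_apply, smul_eq_mul, ← Finset.mul_sum]
    rw [adj_rowsum]
    exact inv_mul_cancel₀ hD.ne'
  set b0 : ℝ := D⁻¹ * (1 / Real.log 2) with hb0def
  have hb0 : 0 ≤ b0 := by positivity
  have hMle : ∀ p q, M p q ≤ b0 := by
    intro p q
    simp only [hMdef, normAdj, Matrix.smul_apply, smul_eq_mul, hb0def]
    exact mul_le_mul_of_nonneg_left (adj_le P hinj p q) (inv_nonneg.mpr hD.le)
  have hM1 : M i (P i k) = D⁻¹ * (1 / a) := by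
    simp only [hMdef, normAdj, Matrix.smul_apply, smul_eq_mul]
    rw [adj_apply_rec P hinj]
  -- Compute the value
  have hval : pprTrunc P c L i (P i k)
      = (1 - c) * ∑ m ∈ Finset.range (L + 1), c ^ m * (M ^ m) i (P i k) := by
    unfold pprTrunc
    simp only [Pi.smul_apply, smul_eq_mul, Matrix.mulVec_single, mul_one,
      Matrix.sum_apply, smul_pow, ← Matrix.transpose_pow, Matrix.smul_apply,
      Matrix.transpose_apply, smul_eq_mul, hMdef, MulOpposite.op_one, one_smul,
      Matrix.col_apply]
  obtain ⟨L', rfl⟩ : ∃ L', L = L' + 1 := ⟨L - 1, (Nat.succ_pred_eq_of_pos hL).symm⟩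
  rw [hval, Finset.sum_range_succ' _ (L' + 1), Finset.sum_range_succ' _ L']
  have hzero : c ^ 0 * (M ^ 0) i (P i k) = 0 := by
    rw [pow_zero, pow_zero, Matrix.one_apply_ne (Ne.symm (hne i k)), mul_zero]
  -- geometric sum bound
  have hgeom : ∑ m ∈ Finset.range L', c ^ m ≤ 1 / (1 - c) := by
    rw [geom_sum_eq (ne_of_lt hc1') L']
    have h1 : (c ^ L' - 1) / (c - 1) = (1 - c ^ L') / (1 - c) := by
      rw [div_eq_div_iff (by linarith : c - 1 < 0).ne (by linarith : (0:ℝ) < 1 - c).ne']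
      ring
    rw [h1]
    have h2 : 1 - c ^ L' ≤ 1 := by linarith [pow_nonneg hc0.le L']
    exact (div_le_div_iff_of_pos_right (by linarith)).mpr h2
  -- tail bound
  have htail : ∑ m ∈ Finset.range L', c ^ (m + 1 + 1) * (M ^ (m + 1 + 1)) i (P i k)
      ≤ (1 / (1 - c)) * (c ^ 2 * b0) := by
    calc ∑ m ∈ Finset.range L', c ^ (m + 1 + 1) * (M ^ (m + 1 + 1)) i (P i k)
        ≤ ∑ m ∈ Finset.range L', c ^ (m + 1 + 1) * b0 :=
          Finset.sum_le_sum fun m _ =>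
            mul_le_mul_of_nonneg_left
              (pow_entry_le M hMnn hMrow b0 hMle (m + 1) i (P i k))
              (pow_nonneg hc0.le _)
      _ = (∑ m ∈ Finset.range L', c ^ m) * (c ^ 2 * b0) := by
          rw [Finset.sum_mul]
          apply Finset.sum_congr rfl
          intro x _
          ring
      _ ≤ (1 / (1 - c)) * (c ^ 2 * b0) := by
          apply mul_le_mul_of_nonneg_right hgeom (by positivity)
  -- Put everything together
  have hfin : (1 - c) * ((1 / (1 - c)) * (c ^ 2 * b0) + c ^ (0 + 1) * (M ^ (0 + 1)) i (P i k))
      < (1 - c) * c / (D * a') := by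
    rw [pow_one, pow_one, hM1]
    have h1c : (1 : ℝ) - c ≠ 0 := by linarith
    have hE : (1 - c) * ((1 / (1 - c)) * (c ^ 2 * b0) + c * (D⁻¹ * (1 / a)))
        = (c ^ 2 / Real.log 2 + (1 - c) * c / a) / D := by
      rw [hb0def]
      field_simp [h1c, hD.ne', hapos.ne', hlog2'.ne']
    have hE' : (1 - c) * c / (D * a') = ((1 - c) * c / a') / D := by
      field_simp [hD.ne', ha'pos.ne']
    rw [hE, hE']
    exact (div_lt_div_iff_of_pos_right hD).mpr hkey

  -- combine
  have hmono : (1 - c) * ((∑ m ∈ Finset.range L', c ^ (m + 1 + 1) * (M ^ (m + 1 + 1)) i (P i k)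
        + c ^ (0 + 1) * (M ^ (0 + 1)) i (P i k)) + c ^ 0 * (M ^ 0) i (P i k))
      ≤ (1 - c) * ((1 / (1 - c)) * (c ^ 2 * b0) + c ^ (0 + 1) * (M ^ (0 + 1)) i (P i k)) := by
    rw [hzero, add_zero]
    exact mul_le_mul_of_nonneg_left (add_le_add_left htail _) (by linarith)
  exact lt_of_le_of_lt hmono hfin
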